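/- Let x_v = (1/(2R)) Σ_{d=0}^{r} (g^+_{v,d} + g^-_{v,d}) and for each agent v let y^{↑v} be the averaged shifted solution with v as an up-agent, each satisfying Σ_{u∈V_k} y^{↑v}_u ≥ (1 − 1/R) min_{u∈V_k} s_u for every objective k. Then for every objective k, Σ_{u∈V_k} x_u ≥ (1/2)(1 − 1/R)(|V_k|/(|V_k|−1)) min_{u∈V_k} s_u. -/

import Mathlib

open Finset

/-- Objective bound for the final output `x_v = (1/(2R)) Σ_{d=0}^r (g⁺_{v,d} +
g⁻_{v,d})`: if each averaged shifted solution `y^{↑v}` (with `v` as an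
up-agent, so that the other agents of each objective of `v` are down-agents)
satisfies `Σ_{u∈V_k} y^{↑v}_u ≥ (1 − 1/R) min_{u∈V_k} s_u` for every objective
`k`, then for every objective `k`,
`Σ_{u∈V_k} x_u ≥ (1/2)(1 − 1/R)(|V_k|/(|V_k|−1)) min_{u∈V_k} s_u`. -/
theorem stmt_15 {V K : Type*} [DecidableEq V]
    (R r : ℕ) (hR : 2 ≤ R) (hr : r = R - 2)
    (Vk : K → Finset V) (hVkne : ∀ k, (Vk k).Nonempty)
    (hVk2 : ∀ k, 2 ≤ (Vk k).card)
    (s : V → ℝ)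
    (gp gm : V → ℕ → ℝ)
    (hgppos : ∀ v d, d ≤ r → 0 ≤ gp v d)
    (hgmpos : ∀ v d, d ≤ r → 0 ≤ gm v d)
    (yup : V → V → ℝ)
    (hself : ∀ v, yup v v = (1 / (R : ℝ)) * ∑ d ∈ range (r + 1), gm v d)
    (hother : ∀ k, ∀ v ∈ Vk k, ∀ w ∈ Vk k, w ≠ v →
      yup v w = (1 / (R : ℝ)) * ∑ d ∈ range (r + 1), gp w d)
    (hobj : ∀ (u : V) (k : K),
      (1 - 1 / (R : ℝ)) * (Vk k).inf' (hVkne k) s ≤ ∑ w ∈ Vk k, yup u w)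
    (x : V → ℝ)
    (hx : ∀ v, x v = (1 / (2 * (R : ℝ))) * ∑ d ∈ range (r + 1), (gp v d + gm v d)) :
    ∀ k, (1 / 2) * (1 - 1 / (R : ℝ)) *
        (((Vk k).card : ℝ) / (((Vk k).card : ℝ) - 1)) * (Vk k).inf' (hVkne k) s ≤
      ∑ u ∈ Vk k, x u := by

  intro k
  set n := (Vk k).card with hn
  have hn2 : (2:ℝ) ≤ (n:ℝ) := by exact_mod_cast hVk2 k
  have hn1 : (0:ℝ) < (n:ℝ) - 1 := by linarith
  set m := (Vk k).inf' (hVkne k) s with hm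
  set Gp : V → ℝ := fun v => ∑ d ∈ range (r + 1), gp v d with hGp
  set Gm : V → ℝ := fun v => ∑ d ∈ range (r + 1), gm v d with hGm
  have hGp0 : ∀ v, 0 ≤ Gp v := fun v =>
    Finset.sum_nonneg fun d hd => hgppos v d (Nat.lt_succ_iff.mp (mem_range.mp hd))
  have hGm0 : ∀ v, 0 ≤ Gm v := fun v =>
    Finset.sum_nonneg fun d hd => hgmpos v d (Nat.lt_succ_iff.mp (mem_range.mp hd))
  set A := ∑ v ∈ Vk k, Gp v with hA
  set B := ∑ v ∈ Vk k, Gm v with hB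
  have hA0 : 0 ≤ A := Finset.sum_nonneg fun v _ => hGp0 v
  have hB0 : 0 ≤ B := Finset.sum_nonneg fun v _ => hGm0 v
  have hRpos : (0:ℝ) < (R:ℝ) := by
    have : (2:ℝ) ≤ (R:ℝ) := by exact_mod_cast hR
    linarith
  have hRinv : (0:ℝ) ≤ 1 / (R:ℝ) := by positivity
  -- compute the double sum
  have hS : ∑ v ∈ Vk k, ∑ w ∈ Vk k, yup v w
      = (1 / (R:ℝ)) * B + ((n:ℝ) - 1) * ((1 / (R:ℝ)) * A) := by
    have hrow : ∀ v ∈ Vk k, ∑ w ∈ Vk k, yup v w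
        = (1 / (R:ℝ)) * Gm v + (1 / (R:ℝ)) * (A - Gp v) := by
      intro v hv
      rw [← Finset.add_sum_erase _ _ hv, hself v]
      have : ∑ w ∈ (Vk k).erase v, yup v w = ∑ w ∈ (Vk k).erase v, (1 / (R:ℝ)) * Gp w := by
        refine Finset.sum_congr rfl fun w hw => ?_
        exact hother k v hv w (Finset.mem_of_mem_erase hw) (Finset.ne_of_mem_erase hw)
      rw [this, ← Finset.mul_sum, Finset.sum_erase_eq_sub hv]
    rw [Finset.sum_congr rfl hrow, Finset.sum_add_distrib, ← Finset.mul_sum, ← Finset.mul_sum,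
      Finset.sum_sub_distrib, Finset.sum_const, nsmul_eq_mul]
    ring
  have hlb : (n:ℝ) * ((1 - 1 / (R:ℝ)) * m) ≤ ∑ v ∈ Vk k, ∑ w ∈ Vk k, yup v w := by
    have := Finset.sum_le_sum (f := fun _ : V => (1 - 1 / (R:ℝ)) * m)
      (g := fun v => ∑ w ∈ Vk k, yup v w) (s := Vk k) (fun v _ => hobj v k)
    simpa [Finset.sum_const, nsmul_eq_mul] using this
  have hxsum : ∑ u ∈ Vk k, x u = (1 / (2 * (R:ℝ))) * (A + B) := by
    rw [hA, hB, ← Finset.sum_add_distrib, Finset.mul_sum]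
    exact Finset.sum_congr rfl fun v _ => by rw [hx v]; simp [hGp, hGm, Finset.sum_add_distrib]
  have key : (n:ℝ) * ((1 - 1 / (R:ℝ)) * m) ≤ 2 * ((n:ℝ) - 1) * ∑ u ∈ Vk k, x u := by
    rw [hxsum]
    have h1 : (1 / (R:ℝ)) * B ≤ ((n:ℝ) - 1) * ((1 / (R:ℝ)) * B) := by
      nlinarith [mul_nonneg hRinv hB0]
    have h2 : 2 * ((n:ℝ) - 1) * ((1 / (2 * (R:ℝ))) * (A + B))
        = ((n:ℝ) - 1) * ((1 / (R:ℝ)) * A) + ((n:ℝ) - 1) * ((1 / (R:ℝ)) * B) := by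
      field_simp
    rw [h2]
    linarith [hlb, hS.ge, hS.le]
  have heq : 1 / 2 * (1 - 1 / (R:ℝ)) * ((n:ℝ) / ((n:ℝ) - 1)) * m
      = ((n:ℝ) * ((1 - 1 / (R:ℝ)) * m)) / (2 * ((n:ℝ) - 1)) := by
    field_simp
  rw [heq, div_le_iff₀ (by linarith : (0:ℝ) < 2 * ((n:ℝ) - 1))]
  nlinarith [key]
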